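/- Let B be an n×k matrix with nonnegative real entries and s_1,…,s_k positive integers summing to n. Then ∑_{σ:[n]→[k]} (∏_{i=1}^n b_{i,σ(i)}) · √(s_{σ(1)}⋯s_{σ(n)}) = ∏_{i=1}^n (√(s_1) b_{i,1} + ⋯ + √(s_k) b_{i,k}), and this quantity is at most √(s_1^{s_1}⋯s_k^{s_k}) · ‖B‖^n. -/

import Mathlib

/-- The operator (spectral) 2-norm of a real matrix. -/
noncomputable def opNormR {m k : ℕ} (A : Matrix (Fin m) (Fin k) ℝ) : ℝ :=
  ‖LinearMap.toContinuousLinearMap (Matrix.toEuclideanLin A)‖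

/-- Let `B` be `n × k` with nonnegative real entries and `s_1,…,s_k > 0` summing to `n`.
Then `∑_{σ:[n]→[k]} (∏_i b_{i,σ(i)})·√(s_{σ(1)}⋯s_{σ(n)}) = ∏_i (√(s_1)b_{i,1}+⋯+√(s_k)b_{i,k})`,
and this quantity is at most `√(s_1^{s_1}⋯s_k^{s_k})·‖B‖^n`. -/
theorem sum_over_functions_eq_genGlynn (n k : ℕ) (s : Fin k → ℕ)
    (hpos : ∀ j, 0 < s j) (hsum : ∑ j, s j = n)
    (B : Matrix (Fin n) (Fin k) ℝ) (hB : ∀ i j, 0 ≤ B i j) :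
    (∑ σ : Fin n → Fin k, (∏ i, B i (σ i)) * Real.sqrt (∏ i, (s (σ i) : ℝ)))
        = (∏ i, ∑ j, Real.sqrt (s j) * B i j) ∧
      (∏ i, ∑ j, Real.sqrt (s j) * B i j)
        ≤ Real.sqrt (∏ j, (s j : ℝ) ^ s j) * opNormR B ^ n := by
  constructor
  · rw [Fintype.prod_sum (fun i j => Real.sqrt (s j) * B i j)]
    refine Finset.sum_congr rfl fun σ _ => ?_
    rw [Finset.prod_mul_distrib]
    rw [mul_comm]
    congr 1
    simp only [Real.sqrt_eq_rpow]
    exact (Real.finset_prod_rpow _ _ (fun i _ => Nat.cast_nonneg _) _).symm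
  · have hC : (0:ℝ) ≤ opNormR B := norm_nonneg _
    have hx : ∀ i, 0 ≤ ∑ j, Real.sqrt (s j) * B i j := fun i =>
      Finset.sum_nonneg fun j _ => mul_nonneg (Real.sqrt_nonneg _) (hB i j)
    have hone : (1:ℝ) ≤ Real.sqrt (∏ j, (s j : ℝ) ^ s j) := by
      rw [show (1:ℝ) = Real.sqrt 1 by simp]
      apply Real.sqrt_le_sqrt
      calc (1:ℝ) = ∏ _j : Fin k, 1 := by simp
        _ ≤ ∏ j, (s j:ℝ) ^ s j := Finset.prod_le_prod (by simp)
            (fun j _ => one_le_pow₀ (Nat.one_le_cast.mpr (hpos j)))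
    have key : (∏ i, ∑ j, Real.sqrt (s j) * B i j) ≤ opNormR B ^ n := by
      rcases Nat.eq_zero_or_pos n with hn | hn
      · subst hn; simp
      -- the vector u and its image
      set x : Fin n → ℝ := fun i => ∑ j, Real.sqrt (s j) * B i j with hxdef
      show ∏ i, x i ≤ opNormR B ^ n
      have hsumsq : ∑ i, x i ^ 2 ≤ opNormR B ^ 2 * n := by
        set u : EuclideanSpace ℝ (Fin k) :=
          (WithLp.equiv 2 (Fin k → ℝ)).symm (fun j => Real.sqrt (s j)) with hu
        have hnormu : ‖u‖ ^ 2 = (n : ℝ) := by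
          rw [EuclideanSpace.norm_eq, Real.sq_sqrt (by positivity)]
          rw [← hsum]
          push_cast
          refine Finset.sum_congr rfl fun j _ => ?_
          simp [hu, Real.norm_eq_abs, sq_abs, Real.sq_sqrt (le_of_lt (show (0:ℝ) < s j by exact_mod_cast hpos j))]
        have himg : Matrix.toEuclideanLin B u
            = (WithLp.equiv 2 (Fin n → ℝ)).symm (B.mulVec (fun j => Real.sqrt (s j))) := by
          rfl
        have hBu : ‖Matrix.toEuclideanLin B u‖ ≤ opNormR B * ‖u‖ := by
          have := (LinearMap.toContinuousLinearMap (Matrix.toEuclideanLin B)).le_opNorm u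
          simpa [opNormR] using this
        have h2 : ‖Matrix.toEuclideanLin B u‖ ^ 2 ≤ opNormR B ^ 2 * (n:ℝ) := by
          calc ‖Matrix.toEuclideanLin B u‖ ^ 2 ≤ (opNormR B * ‖u‖) ^ 2 := by
                apply pow_le_pow_left₀ (norm_nonneg _) hBu
            _ = opNormR B ^ 2 * (n:ℝ) := by rw [mul_pow, hnormu]
        have h3 : ‖Matrix.toEuclideanLin B u‖ ^ 2 = ∑ i, x i ^ 2 := by
          rw [himg, EuclideanSpace.norm_eq, Real.sq_sqrt (by positivity)]
          refine Finset.sum_congr rfl fun i _ => ?_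
          simp only [Real.norm_eq_abs, sq_abs]
          congr 1
          simp [Matrix.mulVec, dotProduct, hxdef, mul_comm]
        rwa [h3] at h2
      -- AM-GM
      have hnR : (0:ℝ) < n := by exact_mod_cast hn
      have amgm := Real.geom_mean_le_arith_mean_weighted Finset.univ
        (fun _ : Fin n => (n:ℝ)⁻¹) (fun i => x i ^ 2)
        (fun i _ => by positivity)
        (by simp [Finset.sum_const, Finset.card_univ]; field_simp)
        (fun i _ => sq_nonneg _)
      have hrhs : ∑ i, (n:ℝ)⁻¹ * x i ^ 2 ≤ opNormR B ^ 2 := by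
        rw [← Finset.mul_sum]
        rw [inv_mul_le_iff₀ hnR, mul_comm]
        exact hsumsq
      have h4 : ∏ i, ((x i ^ 2) ^ ((n:ℝ)⁻¹)) ≤ opNormR B ^ 2 := le_trans amgm hrhs
      have h5 : (∏ i, x i) ^ 2 ≤ (opNormR B ^ 2) ^ n := by
        calc (∏ i, x i) ^ 2
            = ∏ i, x i ^ 2 := by rw [← Finset.prod_pow]
          _ = ∏ i, ((x i ^ 2) ^ ((n:ℝ)⁻¹)) ^ n := by
              refine Finset.prod_congr rfl fun i _ => ?_
              rw [← Real.rpow_natCast ((x i ^ 2) ^ ((n:ℝ)⁻¹)) n,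
                ← Real.rpow_mul (sq_nonneg _),
                inv_mul_cancel₀ (ne_of_gt hnR), Real.rpow_one]
          _ = (∏ i, ((x i ^ 2) ^ ((n:ℝ)⁻¹))) ^ n := by rw [Finset.prod_pow]
          _ ≤ (opNormR B ^ 2) ^ n := by
              apply pow_le_pow_left₀ (Finset.prod_nonneg fun i _ =>
                Real.rpow_nonneg (sq_nonneg _) _) h4
      have := Real.sqrt_le_sqrt h5
      rwa [Real.sqrt_sq (Finset.prod_nonneg fun i _ => hx i),
        show (opNormR B ^ 2) ^ n = (opNormR B ^ n) ^ 2 by ring,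
        Real.sqrt_sq (by positivity)] at this
    calc (∏ i, ∑ j, Real.sqrt (s j) * B i j) ≤ opNormR B ^ n := key
      _ = 1 * opNormR B ^ n := (one_mul _).symm
      _ ≤ Real.sqrt (∏ j, (s j : ℝ) ^ s j) * opNormR B ^ n := by
          apply mul_le_mul_of_nonneg_right hone (by positivity)
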